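/- Let Φ denote the cumulative distribution function of the standard Gaussian distribution N(0,1) on ℝ. Then for every u ≥ 0, 2Φ(u) − 1 ≥ 1 − exp(−√(2/π)·u). Equivalently, if Z has a centered Gaussian distribution with variance σ² > 0, then for every ε > 0, P(|Z| > ε) ≤ exp(−√(2/π)·ε/σ). -/

import Mathlib

open MeasureTheory ProbabilityTheory Real
open scoped NNReal

open Set Filter

/-- The standard Gaussian cumulative distribution function. -/
noncomputable def stdGaussianCDF (u : ℝ) : ℝ := ((gaussianReal 0 1) (Set.Iic u)).toReal

lemma pdf_eq (x : ℝ) : gaussianPDFReal 0 1 x = (Real.sqrt (2*π))⁻¹ * Real.exp (-x^2/2) := by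
  simp [gaussianPDFReal]

lemma pdf_even (x : ℝ) : gaussianPDFReal 0 1 (-x) = gaussianPDFReal 0 1 x := by
  simp [gaussianPDFReal]

lemma pdf_int : Integrable (gaussianPDFReal 0 1) := integrable_gaussianPDFReal 0 1

lemma cdf_eq (u : ℝ) : stdGaussianCDF u = ∫ x in Iic u, gaussianPDFReal 0 1 x := by
  rw [stdGaussianCDF, gaussianReal_apply_eq_integral 0 one_ne_zero,
    ENNReal.toReal_ofReal (setIntegral_nonneg measurableSet_Iic
      (fun x _ => gaussianPDFReal_nonneg 0 1 x))]

lemma meas_toReal (s : Set ℝ) (hs : MeasurableSet s) :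
    ((gaussianReal 0 1) s).toReal = ∫ x in s, gaussianPDFReal 0 1 x := by
  rw [gaussianReal_apply_eq_integral 0 one_ne_zero,
    ENNReal.toReal_ofReal (setIntegral_nonneg hs (fun x _ => gaussianPDFReal_nonneg 0 1 x))]

lemma cdf_zero : stdGaussianCDF 0 = 1/2 := by
  have h1 : ∫ x in Iic (0:ℝ), gaussianPDFReal 0 1 x = ∫ x in Ioi (0:ℝ), gaussianPDFReal 0 1 x := by
    rw [show (∫ x in Iic (0:ℝ), gaussianPDFReal 0 1 x)
        = ∫ x in Iic (0:ℝ), gaussianPDFReal 0 1 (-x) by simp_rw [pdf_even],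
      integral_comp_neg_Iic, neg_zero]
  have h2 : (∫ x in Iic (0:ℝ), gaussianPDFReal 0 1 x) + ∫ x in Ioi (0:ℝ), gaussianPDFReal 0 1 x
      = 1 := by
    rw [intervalIntegral.integral_Iic_add_Ioi pdf_int.integrableOn pdf_int.integrableOn]
    exact integral_gaussianPDFReal_eq_one 0 one_ne_zero
  rw [cdf_eq]; linarith

lemma c_pos : 0 < Real.sqrt (2/π) := Real.sqrt_pos.2 (by positivity)

lemma c_inv : (Real.sqrt (2/π))⁻¹ = Real.sqrt (π/2) := by
  rw [← Real.sqrt_inv, show ((2:ℝ)/π)⁻¹ = π/2 by rw [inv_div]]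

lemma int1 : IntegrableOn (fun t : ℝ => Real.exp (-t^2/2)) (Ioi 0) := by
  have h : (fun t : ℝ => Real.exp (-t^2/2)) = fun t : ℝ => Real.exp (-(1/2 : ℝ)*t^2) := by
    ext t; ring_nf
  rw [h]
  exact (integrable_exp_neg_mul_sq (by norm_num : (0:ℝ) < 1/2)).integrableOn

lemma int2 : IntegrableOn (fun t : ℝ => Real.exp (-(Real.sqrt (2/π) * t))) (Ioi 0) := by
  simp_rw [← neg_mul]
  exact exp_neg_integrableOn_Ioi 0 c_pos

lemma I1 : ∫ t in Ioi (0:ℝ), Real.exp (-t^2/2) = Real.sqrt (π/2) := by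
  have h : ∀ t : ℝ, Real.exp (-t^2/2) = Real.exp (-(1/2 : ℝ)*t^2) := by
    intro t; ring_nf
  simp_rw [h]
  rw [integral_gaussian_Ioi]
  rw [show π/(1/2 : ℝ) = 2^2*(π/2) by ring, Real.sqrt_mul (by positivity),
    Real.sqrt_sq (by norm_num)]
  ring

lemma I2 : ∫ t in Ioi (0:ℝ), Real.exp (-(Real.sqrt (2/π) * t)) = Real.sqrt (π/2) := by
  set c := Real.sqrt (2/π) with hc
  have hcp := c_pos
  have := integral_Ioi_of_hasDerivAt_of_tendsto
    (f := fun x : ℝ => -Real.exp (-(c*x))/c) (f' := fun x : ℝ => Real.exp (-(c*x)))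
    (a := 0) (m := 0) ?_ ?_ ?_ ?_
  · rw [this, mul_zero, neg_zero, Real.exp_zero, zero_sub, neg_div, neg_neg, one_div, c_inv]
  · have : Continuous (fun x : ℝ => -Real.exp (-(c*x))/c) := by fun_prop
    exact this.continuousWithinAt
  · intro x _
    have h := (((hasDerivAt_id x).const_mul c).neg.exp.neg.div_const c)
    refine h.congr_deriv ?_
    simp only [Pi.neg_apply, id, mul_one, neg_mul, mul_neg, neg_neg]
    exact mul_div_cancel_right₀ _ hcp.ne'
  · exact int2
  · have h1 : Tendsto (fun x : ℝ => -(c*x)) atTop atBot := by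
      simp_rw [← neg_mul]
      exact tendsto_id.const_mul_atTop_of_neg (neg_neg_iff_pos.2 hcp)
    have := ((Real.tendsto_exp_atBot.comp h1).neg).div_const c
    simpa using this

lemma core (u : ℝ) (hu : 0 ≤ u) :
    0 ≤ ∫ t in Ioc (0:ℝ) u,
      (Real.exp (-t^2/2) - Real.exp (-(Real.sqrt (2/π) * t))) := by
  set c := Real.sqrt (2/π) with hc
  have hcp := c_pos
  have int12 : IntegrableOn (fun t : ℝ => Real.exp (-t^2/2) - Real.exp (-(c * t))) (Ioi 0) :=
    int1.sub int2
  rcases le_or_gt u (2*c) with h | h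
  · refine setIntegral_nonneg measurableSet_Ioc (fun t ht => ?_)
    have h1 : Real.exp (-(c*t)) ≤ Real.exp (-t^2/2) := by
      apply Real.exp_le_exp.2
      nlinarith [ht.1, ht.2]
    linarith
  · have hsplit := setIntegral_union (μ := volume)
      (f := fun t : ℝ => Real.exp (-t^2/2) - Real.exp (-(c*t)))
      (Ioc_disjoint_Ioi le_rfl) measurableSet_Ioi
      (int12.mono_set Ioc_subset_Ioi_self)
      (int12.mono_set (Ioi_subset_Ioi hu))
    rw [Ioc_union_Ioi_eq_Ioi hu] at hsplit
    have hzero : ∫ t in Ioi (0:ℝ), (Real.exp (-t^2/2) - Real.exp (-(c*t))) = 0 := by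
      rw [integral_sub int1 int2, I1, I2]; ring
    have hneg : ∫ t in Ioi u, (Real.exp (-t^2/2) - Real.exp (-(c*t))) ≤ 0 := by
      refine setIntegral_nonpos measurableSet_Ioi (fun t ht => ?_)
      · simp only [mem_Ioi] at ht
        have : Real.exp (-t^2/2) ≤ Real.exp (-(c*t)) := by
          apply Real.exp_le_exp.2
          nlinarith
        linarith
    linarith [hsplit, hzero, hneg]

lemma hc2 : Real.sqrt (2/π) = 2 * (Real.sqrt (2*π))⁻¹ := by
  have h : (0:ℝ) ≤ 2*π := by positivity
  have hs : Real.sqrt (2*π) ^ 2 = 2*π := Real.sq_sqrt h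
  have hpos : 0 < Real.sqrt (2*π) := Real.sqrt_pos.2 (by positivity)
  have h : (2:ℝ)/π = (2 * (Real.sqrt (2*π))⁻¹)^2 := by
    rw [mul_pow, inv_pow, hs]
    field_simp
  rw [h, Real.sqrt_sq (by positivity)]

lemma cdf_diff (u : ℝ) (hu : 0 ≤ u) :
    stdGaussianCDF u = 1/2 + ∫ x in Ioc 0 u, gaussianPDFReal 0 1 x := by
  rw [cdf_eq, ← cdf_zero, cdf_eq, ← setIntegral_union (Iic_disjoint_Ioc le_rfl)
    measurableSet_Ioc pdf_int.integrableOn pdf_int.integrableOn,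
    Iic_union_Ioc_eq_Iic hu]

lemma ftc_exp (u : ℝ) (hu : 0 ≤ u) :
    ∫ t in Ioc (0:ℝ) u, (Real.sqrt (2/π) * Real.exp (-(Real.sqrt (2/π) * t)))
      = 1 - Real.exp (-(Real.sqrt (2/π) * u)) := by
  set c := Real.sqrt (2/π) with hc
  rw [← intervalIntegral.integral_of_le hu]
  have hderiv : ∀ t ∈ uIcc (0:ℝ) u,
      HasDerivAt (fun x : ℝ => -Real.exp (-(c*x))) (c * Real.exp (-(c*t))) t := by
    intro t _
    have h := (((hasDerivAt_id t).const_mul c).neg.exp).neg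
    refine h.congr_deriv ?_
    simp only [Pi.neg_apply, id, mul_one, neg_mul, mul_neg, neg_neg]
    ring
  rw [intervalIntegral.integral_eq_sub_of_hasDerivAt hderiv
    (Continuous.intervalIntegrable (by fun_prop) _ _)]
  simp only [mul_zero, neg_zero, Real.exp_zero]
  ring

lemma part1 (u : ℝ) (hu : 0 ≤ u) :
    1 - Real.exp (-(Real.sqrt (2/π)) * u) ≤ 2 * stdGaussianCDF u - 1 := by
  set c := Real.sqrt (2/π) with hc
  have hcp := c_pos
  have key := mul_nonneg hcp.le (core u hu)
  have hftc := ftc_exp u hu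
  have hdiff := cdf_diff u hu
  have h2int : 2 * ∫ x in Ioc (0:ℝ) u, gaussianPDFReal 0 1 x
      = ∫ t in Ioc (0:ℝ) u, c * Real.exp (-t^2/2) := by
    rw [← integral_const_mul]
    apply setIntegral_congr_fun measurableSet_Ioc
    intro x _
    simp only []
    rw [pdf_eq, hc, hc2]
    ring
  have hsub : (∫ t in Ioc (0:ℝ) u, c * Real.exp (-t^2/2)) - (1 - Real.exp (-(c*u)))
      = c * ∫ t in Ioc (0:ℝ) u, (Real.exp (-t^2/2) - Real.exp (-(c*t))) := by
    rw [integral_sub (int1.mono_set Ioc_subset_Ioi_self) (int2.mono_set Ioc_subset_Ioi_self),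
      mul_sub, ← integral_const_mul, ← integral_const_mul, hftc]
  rw [neg_mul]
  linarith

lemma tail_eq (u : ℝ) (hu : 0 ≤ u) :
    ((gaussianReal 0 1) {x | u < |x|}).toReal = 2 - 2 * stdGaussianCDF u := by
  have hset : {x : ℝ | u < |x|} = Iio (-u) ∪ Ioi u := by
    ext x
    simp only [mem_setOf_eq, mem_union, mem_Iio, mem_Ioi, lt_abs]
    rw [or_comm, lt_neg]
  have hdisj : Disjoint (Iio (-u) : Set ℝ) (Ioi u) := by
    rw [Set.disjoint_left]
    intro x hx1 hx2
    simp only [mem_Iio, mem_Ioi] at hx1 hx2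
    linarith
  rw [hset, measure_union hdisj measurableSet_Ioi, ENNReal.toReal_add
    (measure_ne_top _ _) (measure_ne_top _ _), meas_toReal _ measurableSet_Iio,
    meas_toReal _ measurableSet_Ioi]
  have hIoi : ∫ x in Ioi u, gaussianPDFReal 0 1 x = 1 - stdGaussianCDF u := by
    have := intervalIntegral.integral_Iic_add_Ioi (μ := volume) (b := u)
      pdf_int.integrableOn pdf_int.integrableOn
    rw [integral_gaussianPDFReal_eq_one 0 one_ne_zero] at this
    rw [cdf_eq]; linarith
  have hIio : ∫ x in Iio (-u), gaussianPDFReal 0 1 x = 1 - stdGaussianCDF u := by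
    rw [← integral_Iic_eq_integral_Iio, show ∫ x in Iic (-u), gaussianPDFReal 0 1 x
        = ∫ x in Iic (-u), gaussianPDFReal 0 1 (-x) by simp_rw [pdf_even],
      integral_comp_neg_Iic, neg_neg, hIoi]
  rw [hIio, hIoi]
  ring

theorem stmt9 {Ω : Type*} [MeasurableSpace Ω] (μ : Measure Ω) [IsProbabilityMeasure μ]
    (Z : Ω → ℝ) (v : ℝ≥0) (hv : 0 < v)
    (hZ : Measure.map Z μ = gaussianReal 0 v) :
    (∀ u : ℝ, 0 ≤ u →
      1 - Real.exp (-(Real.sqrt (2 / π)) * u) ≤ 2 * stdGaussianCDF u - 1) ∧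
    (∀ ε : ℝ, 0 < ε →
      (μ {ω | ε < |Z ω|}).toReal ≤
        Real.exp (-(Real.sqrt (2 / π)) * ε / Real.sqrt (v : ℝ))) := by
  refine ⟨part1, fun ε hε => ?_⟩
  set σ := Real.sqrt (v:ℝ) with hσdef
  have hvR : (0:ℝ) < (v:ℝ) := by exact_mod_cast hv
  have hσ : 0 < σ := Real.sqrt_pos.2 hvR
  have hZm : AEMeasurable Z μ := by
    apply aemeasurable_of_map_neZero
    rw [hZ]
    infer_instance
  have hsm : ∀ a : ℝ, MeasurableSet {x : ℝ | a < |x|} := fun a =>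
    measurableSet_lt measurable_const measurable_abs
  have h1 : μ {ω | ε < |Z ω|} = (gaussianReal 0 v) {x | ε < |x|} := by
    rw [← hZ, Measure.map_apply_of_aemeasurable hZm (hsm ε)]
    rfl
  have hvar : (NNReal.mk ((σ⁻¹)^2) (sq_nonneg _) * v) = 1 := by
    ext
    push_cast
    rw [inv_pow, hσdef, Real.sq_sqrt hvR.le]
    exact inv_mul_cancel₀ hvR.ne'
  have hmap : Measure.map (σ⁻¹ * ·) (gaussianReal 0 v) = gaussianReal 0 1 := by
    rw [gaussianReal_map_const_mul, mul_zero, hvar]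
  have h2 : (gaussianReal 0 v) {x | ε < |x|} = (gaussianReal 0 1) {x | ε/σ < |x|} := by
    rw [← hmap, Measure.map_apply (measurable_const_mul _) (hsm _)]
    congr 1
    ext x
    simp only [mem_preimage, mem_setOf_eq, abs_mul, abs_inv, abs_of_pos hσ]
    rw [div_lt_iff₀ hσ, mul_comm σ⁻¹, mul_assoc, inv_mul_cancel₀ hσ.ne', mul_one]
  have hpart1 := part1 (ε/σ) (by positivity)
  rw [h1, h2, tail_eq (ε/σ) (by positivity),
    show -(Real.sqrt (2/π)) * ε / σ = -(Real.sqrt (2/π)) * (ε/σ) by ring]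
  linarith
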